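/- Consider the tree automaton B_S with states {0,1,2,3}, signature Σ = {a (binary), S (constant)}, final states {3}, and transitions S ⇝ 0, a(0,q) ⇝ 1, a(1,q) ⇝ 2, a(2,q) ⇝ 3 for q ∈ {0,1,2}, and a(3,q) ⇝ 3, a(q',3) ⇝ 3 for all q ∈ {0,1,2}, q' ∈ {0,1,2,3}. Then B_S accepts a ground term t if and only if t contains a subterm of the form a(a(a(S,x),y),z), i.e., a redex of the rule a(a(a(S,x),y),z) → a(a(x,z),a(y,z)). -/

import Mathlib

/-- Terms over a ranked signature `F` (with arity `ar`) and variables `V`.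
States of a tree automaton are treated as extra constants, i.e. variables. -/
inductive Tm (F : Type) (ar : F → ℕ) (V : Type) : Type
  | var : V → Tm F ar V
  | node : (f : F) → (Fin (ar f) → Tm F ar V) → Tm F ar V

namespace Tm

variable {F : Type} {ar : F → ℕ}

/-- Substitution. -/
def subst {V W : Type} (σ : V → Tm F ar W) : Tm F ar V → Tm F ar W
  | var x => σ x
  | node f ts => node f (fun i => (ts i).subst σ)

/-- The list of variable occurrences of a term. -/
def varsList {V : Type} : Tm F ar V → List V
  | var x => [x]
  | node f ts => (List.ofFn (fun i => (ts i).varsList)).flatten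

/-- A term is linear if every variable occurs at most once. -/
def Linear {V : Type} (t : Tm F ar V) : Prop := t.varsList.Nodup

/-- Subterm relation. -/
inductive Subtm {V : Type} : Tm F ar V → Tm F ar V → Prop
  | refl (t : Tm F ar V) : Subtm t t
  | child {s : Tm F ar V} {f : F} {ts : Fin (ar f) → Tm F ar V} (i : Fin (ar f)) :
      Subtm s (ts i) → Subtm s (node f ts)

end Tm

/-- Ground terms: terms without variables. -/
abbrev GTm (F : Type) (ar : F → ℕ) : Type := Tm F ar Empty

/-- A ground term viewed as a term over any variable type. -/
def GTm.toTm {F : Type} {ar : F → ℕ} {V : Type} (t : GTm F ar) : Tm F ar V :=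
  t.subst (fun e => e.elim)

/-- A (bottom-up, possibly non-deterministic) tree automaton:
final states and a transition relation `δ`. -/
structure Automaton (F : Type) (ar : F → ℕ) (Q : Type) where
  final : Set Q
  delta : (f : F) → (Fin (ar f) → Q) → Q → Prop

namespace Automaton

variable {F : Type} {ar : F → ℕ} {Q Q' : Type}

/-- One rewrite step `⇝` induced by an automaton on terms over `Σ ∪ Q`. -/
inductive Step (A : Automaton F ar Q) : Tm F ar Q → Tm F ar Q → Prop
  | base {f : F} {qs : Fin (ar f) → Q} {q : Q} :
      A.delta f qs q → Step A (.node f (fun i => .var (qs i))) (.var q)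
  | congr {f : F} {ts : Fin (ar f) → Tm F ar Q} {i : Fin (ar f)} {t' : Tm F ar Q} :
      Step A (ts i) t' → Step A (.node f ts) (.node f (Function.update ts i t'))

/-- The reduction relation `⇝*`. -/
def Steps (A : Automaton F ar Q) : Tm F ar Q → Tm F ar Q → Prop :=
  Relation.ReflTransGen (Step A)

/-- A state is reachable if some ground term reduces to it. -/
def Reachable (A : Automaton F ar Q) (q : Q) : Prop :=
  ∃ t : GTm F ar, A.Steps t.toTm (.var q)

/-- The language of the automaton. -/
def Lang (A : Automaton F ar Q) : Set (GTm F ar) :=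
  {t | ∃ q ∈ A.final, A.Steps t.toTm (.var q)}

/-- The product automaton. -/
def prod (A : Automaton F ar Q) (B : Automaton F ar Q') : Automaton F ar (Q × Q') where
  final := A.final ×ˢ B.final
  delta f qs q := A.delta f (fun i => (qs i).1) q.1 ∧ B.delta f (fun i => (qs i).2) q.2

/-- Determinism. -/
def Deterministic (A : Automaton F ar Q) : Prop :=
  ∀ (f : F) (qs : Fin (ar f) → Q) (q q' : Q), A.delta f qs q → A.delta f qs q' → q = q'

/-- Completeness. -/
def Complete (A : Automaton F ar Q) : Prop :=
  ∀ (f : F) (qs : Fin (ar f) → Q), ∃ q : Q, A.delta f qs q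

end Automaton

/-- A term rewriting system: a set of rules over variables `X`. -/
abbrev TRS (F : Type) (ar : F → ℕ) (X : Type) : Type := Set (Tm F ar X × Tm F ar X)

/-- A TRS is left-linear if no variable occurs twice in a left-hand side. -/
def LeftLinear {F : Type} {ar : F → ℕ} {X : Type} (R : TRS F ar X) : Prop :=
  ∀ p ∈ R, p.1.Linear

/-- One rewrite step `→_R` (on terms over any variable type `V`). -/
inductive RStep {F : Type} {ar : F → ℕ} {X V : Type} (R : TRS F ar X) :
    Tm F ar V → Tm F ar V → Prop
  | base {l r : Tm F ar X} {σ : X → Tm F ar V} :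
      (l, r) ∈ R → RStep R (l.subst σ) (r.subst σ)
  | congr {f : F} {ts : Fin (ar f) → Tm F ar V} {i : Fin (ar f)} {t' : Tm F ar V} :
      RStep R (ts i) t' → RStep R (.node f ts) (.node f (Function.update ts i t'))

/-- `t` is an `R`-normal form. -/
def IsNF {F : Type} {ar : F → ℕ} {X V : Type} (R : TRS F ar X) (t : Tm F ar V) : Prop :=
  ∀ t', ¬ RStep R t t'

/-- The signature of combinatory logic restricted to `S`: binary application `a`
and constant `S`. -/
inductive SSig : Type
  | a : SSig
  | S : SSig

/-- Arities: `a` is binary, `S` is a constant. -/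
def sar : SSig → ℕ
  | .a => 2
  | .S => 0

/-- Application on terms over the signature. -/
def app {V : Type} (u v : Tm SSig sar V) : Tm SSig sar V :=
  Tm.node SSig.a ![u, v]

/-- The constant `S` as a term. -/
def STm {V : Type} : Tm SSig sar V :=
  Tm.node SSig.S ![]

/-- The first argument position of `a`. -/
def i0 : Fin (sar SSig.a) := ⟨0, by decide⟩

/-- The second argument position of `a`. -/
def i1 : Fin (sar SSig.a) := ⟨1, by decide⟩

/-- The automaton `B_S` recognizing ground terms containing an `S`-redex. -/
def BS : Automaton SSig sar (Fin 4) where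
  final := {3}
  delta f qs q :=
    match f with
    | .S => q = 0
    | .a =>
        (qs i0 = 0 ∧ qs i1 ≠ 3 ∧ q = 1) ∨
        (qs i0 = 1 ∧ qs i1 ≠ 3 ∧ q = 2) ∨
        (qs i0 = 2 ∧ qs i1 ≠ 3 ∧ q = 3) ∨
        (qs i0 = 3 ∧ qs i1 ≠ 3 ∧ q = 3) ∨
        (qs i1 = 3 ∧ q = 3)


namespace BSproof

def erankA (q0 q1 : Fin 4) : Fin 4 :=
  if q1 = 3 then 3 else if q0 = 0 then 1 else if q0 = 1 then 2 else 3

noncomputable def erank : Tm SSig sar (Fin 4) → Fin 4 :=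
  Tm.rec (fun q => q)
    (fun f _ts ih => match f, ih with
      | .S, _ => 0
      | .a, ih => erankA (ih i0) (ih i1))

@[simp] lemma erank_var (q : Fin 4) : erank (.var q) = q := rfl
@[simp] lemma erank_S (ts) : erank (.node .S ts) = 0 := rfl
@[simp] lemma erank_a (ts) : erank (.node .a ts) = erankA (erank (ts i0)) (erank (ts i1)) := rfl

example (u v : GTm SSig sar) :
    erank (GTm.toTm (app u v)) = erankA (erank u.toTm) (erank v.toTm) := rfl
example : erank (GTm.toTm (STm : GTm SSig sar)) = 0 := rfl

lemma delta_a_iff : ∀ (q0 q1 q : Fin 4),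
    ((q0 = 0 ∧ q1 ≠ 3 ∧ q = 1) ∨ (q0 = 1 ∧ q1 ≠ 3 ∧ q = 2) ∨ (q0 = 2 ∧ q1 ≠ 3 ∧ q = 3) ∨
     (q0 = 3 ∧ q1 ≠ 3 ∧ q = 3) ∨ (q1 = 3 ∧ q = 3)) ↔ q = erankA q0 q1 := by decide

example (qs : Fin (sar .a) → Fin 4) (q : Fin 4) (h : BS.delta .a qs q) :
    q = erankA (qs i0) (qs i1) := (delta_a_iff _ _ _).mp h


lemma Step_erank {s s' : Tm SSig sar (Fin 4)} (h : BS.Step s s') : erank s' = erank s := by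
  induction h with
  | @base f qs q hd =>
    cases f with
    | S => exact hd
    | a => exact (delta_a_iff (qs i0) (qs i1) q).mp hd
  | @congr f ts i t' hstep ih =>
    cases f with
    | S => rfl
    | a =>
      have key : ∀ j, erank (Function.update ts i t' j) = erank (ts j) := by
        intro j
        rcases eq_or_ne j i with rfl | hji
        · rw [Function.update_self]; exact ih
        · rw [Function.update_of_ne hji]
      rw [erank_a, erank_a, key, key]

lemma steps_erank {t s : Tm SSig sar (Fin 4)} (h : BS.Steps t s) : erank t = erank s := by
  induction h with
  | refl => rfl
  | tail _ hstep ih => exact ih.trans (Step_erank hstep).symm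


lemma steps_congr {Q : Type} {A : Automaton SSig sar Q} {f : SSig}
    {ts : Fin (sar f) → Tm SSig sar Q} {i : Fin (sar f)} {t' : Tm SSig sar Q}
    (h : A.Steps (ts i) t') :
    A.Steps (.node f ts) (.node f (Function.update ts i t')) := by
  induction h with
  | refl => rw [Function.update_eq_self]; exact Relation.ReflTransGen.refl
  | @tail b c _ hstep ih =>
    refine ih.tail ?_
    have : c = Function.update (Function.update ts i b) i c i := by
      rw [Function.update_self]
    have hs : A.Step (Function.update ts i b i) c := by
      rw [Function.update_self]; exact hstep
    have := Automaton.Step.congr (A := A) (f := f) (ts := Function.update ts i b) (i := i) hs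
    rwa [Function.update_idem] at this

lemma fin2_eta {X : Type} (ts : Fin (sar SSig.a) → X) : ts = ![ts i0, ts i1] := by
  funext j
  fin_cases j <;> rfl

lemma node_a_eq_app {V : Type} (ts : Fin (sar SSig.a) → Tm SSig sar V) :
    Tm.node .a ts = app (ts i0) (ts i1) := by
  rw [app, ← fin2_eta]

lemma delta_a_holds (q0 q1 : Fin 4) : BS.delta .a ![q0, q1] (erankA q0 q1) :=
  (delta_a_iff q0 q1 _).mpr rfl

lemma steps_to_rank (t : GTm SSig sar) : BS.Steps (GTm.toTm t) (.var (erank (GTm.toTm t))) := by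
  induction t with
  | var e => exact e.elim
  | node f ts ih =>
    cases f with
    | S =>
      have he : (GTm.toTm (Tm.node .S ts) : Tm SSig sar (Fin 4))
          = Tm.node .S (fun i => Tm.var ((fun _ => (0 : Fin 4)) i)) := by
        show Tm.node SSig.S (fun i => (GTm.toTm (ts i) : Tm SSig sar (Fin 4))) = _
        exact congrArg _ (funext fun i => i.elim0)
      rw [show erank (GTm.toTm (Tm.node .S ts) : Tm SSig sar (Fin 4)) = 0 from rfl, he]
      exact Relation.ReflTransGen.single (Automaton.Step.base (show BS.delta .S _ 0 from rfl))
    | a =>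
      set q0 : Fin 4 := erank (GTm.toTm (ts i0)) with hq0
      set q1 : Fin 4 := erank (GTm.toTm (ts i1)) with hq1
      set tts : Fin (sar SSig.a) → Tm SSig sar (Fin 4) := fun i => GTm.toTm (ts i) with htts
      have h1 : BS.Steps (.node .a tts) (.node .a (Function.update tts i0 (.var q0))) :=
        steps_congr (ih i0)
      have h2 : BS.Steps (.node .a (Function.update tts i0 (.var q0)))
          (.node .a (Function.update (Function.update tts i0 (.var q0)) i1 (.var q1))) := by
        refine steps_congr ?_
        rw [Function.update_of_ne (by decide)]
        exact ih i1
      have he : Function.update (Function.update tts i0 (.var q0)) i1 (.var q1)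
          = fun i => Tm.var ((![q0, q1]) i) := by
        funext j
        fin_cases j <;> simp [Function.update_apply, i0, i1] <;> rfl
      have h3 : BS.Step (.node .a (fun i => Tm.var ((![q0, q1]) i)))
          (.var (erankA q0 q1)) :=
        Automaton.Step.base (delta_a_holds _ _)
      have hr : erank (GTm.toTm (Tm.node .a ts) : Tm SSig sar (Fin 4)) = erankA q0 q1 := rfl
      rw [hr]
      show BS.Steps (.node .a tts) _
      exact ((h1.trans h2).trans (by rw [he]; exact Relation.ReflTransGen.refl)).tail h3


def HasRedex (t : GTm SSig sar) : Prop :=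
  ∃ s : GTm SSig sar, Tm.Subtm s t ∧ ∃ x y z : GTm SSig sar, s = app (app (app STm x) y) z

lemma Subtm.trans' {V : Type} {a b c : Tm SSig sar V} (h1 : Tm.Subtm a b) (h2 : Tm.Subtm b c) :
    Tm.Subtm a c := by
  induction h2 with
  | refl => exact h1
  | child i _ ih => exact Tm.Subtm.child i ih

-- decide facts
lemma erankA_ne_zero : ∀ a b : Fin 4, erankA a b ≠ 0 := by decide
lemma erankA_eq_one : ∀ a b : Fin 4, erankA a b = 1 → a = 0 := by decide
lemma erankA_eq_two : ∀ a b : Fin 4, erankA a b = 2 → a = 1 := by decide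
lemma erankA_eq_three : ∀ a b : Fin 4, erankA a b = 3 → b = 3 ∨ a = 2 ∨ a = 3 := by decide
lemma erankA_redex : ∀ rx ry rz : Fin 4, erankA (erankA (erankA 0 rx) ry) rz = 3 := by decide
lemma erankA_left3 : ∀ b : Fin 4, erankA 3 b = 3 := by decide
lemma erankA_right3 : ∀ a : Fin 4, erankA a 3 = 3 := by decide

lemma grank_app (u v : GTm SSig sar) :
    erank (GTm.toTm (app u v)) = erankA (erank (GTm.toTm u)) (erank (GTm.toTm v)) := rfl

lemma grank_node_a (ts : Fin (sar SSig.a) → GTm SSig sar) :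
    erank (GTm.toTm (Tm.node .a ts)) = erankA (erank (GTm.toTm (ts i0))) (erank (GTm.toTm (ts i1))) := rfl

lemma redex_rank (t : GTm SSig sar) (h : HasRedex t) : erank (GTm.toTm t) = 3 := by
  obtain ⟨s, hsub, x, y, z, rfl⟩ := h
  induction hsub with
  | refl => exact erankA_redex _ _ _
  | @child f ts i _ ih =>
    cases f with
    | S => exact i.elim0
    | a =>
      rw [grank_node_a]
      fin_cases i
      · have h0 : erank (GTm.toTm (ts i0)) = 3 := ih
        rw [h0]; exact erankA_left3 _
      · have h1 : erank (GTm.toTm (ts i1)) = 3 := ih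
        rw [h1]; exact erankA_right3 _

lemma rank_lemma (t : GTm SSig sar) :
    (erank (GTm.toTm t) = 0 → t = STm) ∧
    (erank (GTm.toTm t) = 1 → ∃ x, t = app STm x) ∧
    (erank (GTm.toTm t) = 2 → ∃ x y, t = app (app STm x) y) ∧
    (erank (GTm.toTm t) = 3 → HasRedex t) := by
  induction t with
  | var e => exact e.elim
  | node f ts ih =>
    cases f with
    | S =>
      have hS : Tm.node SSig.S ts = (STm : GTm SSig sar) := by
        exact congrArg _ (funext fun i => i.elim0)
      rw [hS]
      exact ⟨fun _ => rfl, fun h => absurd h (by decide), fun h => absurd h (by decide),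
        fun h => absurd h (by decide)⟩
    | a =>
      obtain ⟨hu0, hu1, hu2, hu3⟩ := ih i0
      obtain ⟨hv0, hv1, hv2, hv3⟩ := ih i1
      rw [grank_node_a, node_a_eq_app ts]
      refine ⟨fun h => absurd h (erankA_ne_zero _ _), ?_, ?_, ?_⟩
      · intro h
        rw [hu0 (erankA_eq_one _ _ h)]
        exact ⟨ts i1, rfl⟩
      · intro h
        obtain ⟨x, hx⟩ := hu1 (erankA_eq_two _ _ h)
        exact ⟨x, ts i1, by rw [hx]⟩
      · intro h
        rcases erankA_eq_three _ _ h with h3 | h3 | h3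
        · obtain ⟨s, hsub, w⟩ := hv3 h3
          exact ⟨s, Tm.Subtm.child i1 hsub, w⟩
        · obtain ⟨x, y, hxy⟩ := hu2 h3
          exact ⟨app (ts i0) (ts i1), Tm.Subtm.refl _, x, y, ts i1, by rw [hxy]⟩
        · obtain ⟨s, hsub, w⟩ := hu3 h3
          exact ⟨s, Tm.Subtm.child i0 hsub, w⟩

end BSproof

/-- `B_S` accepts a ground term iff it contains a redex of the `S`-rule
`a(a(a(S,x),y),z) → a(a(x,z),a(y,z))`, i.e. a subterm of the form `a(a(a(S,x),y),z)`. -/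
theorem BS_accepts_iff_contains_redex (t : GTm SSig sar) :
    t ∈ BS.Lang ↔
      ∃ s : GTm SSig sar, Tm.Subtm s t ∧
        ∃ x y z : GTm SSig sar, s = app (app (app STm x) y) z := by
  constructor
  · rintro ⟨q, hq, hsteps⟩
    have hq3 : q = 3 := hq
    subst hq3
    have h3 : BSproof.erank (GTm.toTm t) = 3 := BSproof.steps_erank hsteps
    exact (BSproof.rank_lemma t).2.2.2 h3
  · intro h
    refine ⟨3, rfl, ?_⟩
    have hr := BSproof.redex_rank t h
    have hs := BSproof.steps_to_rank t
    rwa [hr] at hs
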